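/- Let p be a prime with p ≡ 1 (mod 3), let β ∈ F_p satisfy β² = −27, let χ : F_p → ℂ be a multiplicative character of order 3 (extended by χ(0) = 0), and let x ∈ F_p be nonzero. Then ∑_{y ∈ F_p} ∑_{z ∈ F_p, z ≠ 0, y² = x³ − 27z²} χ(y − βz) = −1 − (x/p), where (x/p) is the Legendre symbol of x modulo p (viewed in ℂ). -/

import Mathlib

open Finset

/-- Let `p ≡ 1 (mod 3)` be prime, `β² = -27` in `F_p`, `χ` a multiplicative
character of order 3 on `F_p` (valued in `ℂ`, extended by `χ 0 = 0`), and
`x ∈ F_p` nonzero. Then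
`∑_{y} ∑_{z ≠ 0, y² = x³ - 27z²} χ(y - βz) = -1 - (x/p)`,
where `(x/p)` is the Legendre symbol. -/
theorem inner_double_sum_eq
    (p : ℕ) [Fact p.Prime] (hp3 : p % 3 = 1)
    (β : ZMod p) (hβ : β ^ 2 = -27)
    (χ : MulChar (ZMod p) ℂ) (hχ : orderOf χ = 3)
    (x : ZMod p) (hx : x ≠ 0) :
    (∑ y : ZMod p,
        ∑ z ∈ univ.filter
            (fun z : ZMod p => z ≠ 0 ∧ y ^ 2 = x ^ 3 - 27 * z ^ 2),
          χ (y - β * z))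
      = -1 - (legendreSym p x.val : ℂ) := by
  have hp : p.Prime := Fact.out
  have hpn2 : p ≠ 2 := by rintro rfl; simp at hp3
  have hpn3 : p ≠ 3 := by rintro rfl; simp at hp3
  have h2 : (2 : ZMod p) ≠ 0 := by
    intro h
    have := (ZMod.natCast_eq_zero_iff 2 p).mp (by exact_mod_cast h)
    exact hpn2 ((Nat.prime_dvd_prime_iff_eq hp Nat.prime_two).mp this)
  have h27 : (27 : ZMod p) ≠ 0 := by
    intro h
    have h3 : p ∣ 3 ^ 3 := (ZMod.natCast_eq_zero_iff 27 p).mp (by exact_mod_cast h)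
    have := hp.dvd_of_dvd_pow h3
    exact hpn3 ((Nat.prime_dvd_prime_iff_eq hp Nat.prime_three).mp this)
  have hβ0 : β ≠ 0 := by
    intro h; apply h27; have := hβ; rw [h] at this; simpa using this.symm
  have hx3 : x ^ 3 ≠ 0 := pow_ne_zero 3 hx
  -- χ of a cube is 1
  have hχpow : (χ : MulChar (ZMod p) ℂ) ^ 3 = 1 := hχ ▸ pow_orderOf_eq_one χ
  have hχ3 : ∀ a : ZMod p, a ≠ 0 → χ a ^ 3 = 1 := by
    intro a ha
    have hu : IsUnit a := isUnit_iff_ne_zero.2 ha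
    calc χ a ^ 3 = (χ ^ 3) a := (MulChar.pow_apply' χ (by norm_num) a).symm
      _ = (1 : MulChar (ZMod p) ℂ) a := by rw [hχpow]
      _ = 1 := by rw [← hu.unit_spec]; exact MulChar.one_apply_coe hu.unit
  have hχneg : χ (-1) = 1 := by
    have h1 : χ (-1) ^ 3 = 1 := hχ3 (-1) (by simp)
    have h2' : χ (-1) ^ 2 = 1 := by
      rw [← map_pow]; norm_num
    have := h1
    rw [pow_succ, h2', one_mul] at this
    exact this
  have hχ1 : χ ≠ 1 := by
    intro h; rw [h, orderOf_one] at hχ; norm_num at hχ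
  -- Step 1: rewrite as a sum over pairs
  have step1 : (∑ y : ZMod p,
        ∑ z ∈ univ.filter
            (fun z : ZMod p => z ≠ 0 ∧ y ^ 2 = x ^ 3 - 27 * z ^ 2),
          χ (y - β * z))
      = ∑ a ∈ (univ ×ˢ univ).filter
          (fun a : ZMod p × ZMod p => a.2 ≠ 0 ∧ a.1 ^ 2 = x ^ 3 - 27 * a.2 ^ 2),
          χ (a.1 - β * a.2) := by
    rw [Finset.sum_filter, Finset.sum_product]
    simp [Finset.sum_filter]
  -- Step 2: bijection with {u ≠ 0, u² ≠ x³}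
  have step2 : (∑ a ∈ (univ ×ˢ univ).filter
          (fun a : ZMod p × ZMod p => a.2 ≠ 0 ∧ a.1 ^ 2 = x ^ 3 - 27 * a.2 ^ 2),
          χ (a.1 - β * a.2))
      = ∑ u ∈ univ.filter (fun u : ZMod p => u ≠ 0 ∧ u ^ 2 ≠ x ^ 3), χ u := by
    apply Finset.sum_nbij' (i := fun a : ZMod p × ZMod p => a.1 - β * a.2)
      (j := fun u : ZMod p => ((u + x ^ 3 * u⁻¹) / 2, (x ^ 3 * u⁻¹ - u) / (2 * β)))
    · rintro ⟨y, z⟩ ha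
      simp only [Finset.mem_filter, Finset.mem_product, Finset.mem_univ, true_and] at ha ⊢
      obtain ⟨hz, hy⟩ := ha
      have huv : (y - β * z) * (y + β * z) = x ^ 3 := by
        linear_combination hy - z ^ 2 * hβ
      have hu0 : y - β * z ≠ 0 := by
        intro h; apply hx3; rw [← huv, h, zero_mul]
      refine ⟨hu0, ?_⟩
      intro h
      have : y + β * z = y - β * z := by
        apply mul_left_cancel₀ hu0
        rw [huv, ← h]; ring
      have hz2 : (2 * β) * z = 0 := by linear_combination this
      exact (mul_ne_zero (mul_ne_zero h2 hβ0) hz) hz2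
    · rintro u hu
      simp only [Finset.mem_filter, Finset.mem_univ, true_and] at hu ⊢
      obtain ⟨hu0, hu2⟩ := hu
      refine ⟨Finset.mem_product.mpr ⟨Finset.mem_univ _, Finset.mem_univ _⟩, ?_, ?_⟩
      · intro h
        rw [div_eq_zero_iff] at h
        rcases h with h | h
        · apply hu2
          have : x ^ 3 * u⁻¹ = u := by linear_combination h
          field_simp at this
          linear_combination -this
        · exact (mul_ne_zero h2 hβ0) h
      · field_simp
        linear_combination (4 * u ^ 2 * (u ^ 2 - x ^ 3) ^ 2 + (u ^ 4 - 4 * u ^ 6 + x ^ 6 - 2 * u ^ 2 * x ^ 3 - 4 * u ^ 2 * x ^ 6 + 8 * u ^ 4 * x ^ 3)) * hβ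
    · rintro ⟨y, z⟩ ha
      simp only [Finset.mem_filter, Finset.mem_product, Finset.mem_univ, true_and] at ha
      obtain ⟨hz, hy⟩ := ha
      have huv : (y - β * z) * (y + β * z) = x ^ 3 := by
        linear_combination hy - z ^ 2 * hβ
      have hu0 : y - β * z ≠ 0 := by
        intro h; apply hx3; rw [← huv, h, zero_mul]
      have hv : x ^ 3 * (y - β * z)⁻¹ = y + β * z := by
        rw [mul_inv_eq_iff_eq_mul₀ hu0]
        linear_combination -huv
      rw [hv]
      have e1 : (y - β * z + (y + β * z)) / 2 = y := by field_simp; ring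
      have e2 : (y + β * z - (y - β * z)) / (2 * β) = z := by
        field_simp; ring
      exact Prod.ext e1 e2
    · rintro u hu
      simp only [Finset.mem_filter, Finset.mem_univ, true_and] at hu
      obtain ⟨hu0, _⟩ := hu
      field_simp
      ring
    · rintro a _; rfl
  rw [step1, step2]
  have hcast : ((x.val : ℕ) : ZMod p) = x := by rw [ZMod.natCast_val, ZMod.cast_id]
  set A := ∑ u ∈ univ.filter (fun u : ZMod p => u ≠ 0 ∧ u ^ 2 ≠ x ^ 3), χ u with hA
  set B := ∑ u ∈ univ.filter (fun u : ZMod p => u ≠ 0 ∧ u ^ 2 = x ^ 3), χ u with hB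
  have hAB : A + B = 0 := by
    have : A + B = ∑ u : ZMod p, χ u := by
      rw [hA, hB, Finset.sum_filter, Finset.sum_filter, ← Finset.sum_add_distrib]
      apply Finset.sum_congr rfl
      intro u _
      by_cases h0 : u = 0
      · subst h0; simp [MulChar.map_zero]
      · by_cases hsq : u ^ 2 = x ^ 3 <;> simp [h0, hsq]
    rw [this]
    exact MulChar.sum_eq_zero_of_ne_one hχ1
  have hAeq : A = -B := by linear_combination hAB
  rw [hAeq]
  by_cases hxsq : IsSquare x
  · obtain ⟨s, hs⟩ := hxsq
    have hs0 : s ≠ 0 := by rintro rfl; simp at hs; exact hx hs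
    have hne : s ^ 3 ≠ -s ^ 3 := by
      intro h
      have h' : (2 : ZMod p) * s ^ 3 = 0 := by linear_combination h
      exact (mul_ne_zero h2 (pow_ne_zero 3 hs0)) h'
    have hset : univ.filter (fun u : ZMod p => u ≠ 0 ∧ u ^ 2 = x ^ 3)
        = {s ^ 3, -s ^ 3} := by
      ext u
      simp only [Finset.mem_filter, Finset.mem_univ, true_and, Finset.mem_insert,
        Finset.mem_singleton]
      constructor
      · rintro ⟨hu0, hu2⟩
        have hfac : (u - s ^ 3) * (u + s ^ 3) = 0 := by
          linear_combination hu2 + (x ^ 2 + x * s ^ 2 + s ^ 4) * hs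
        rcases mul_eq_zero.mp hfac with h | h
        · exact Or.inl (sub_eq_zero.mp h)
        · exact Or.inr (eq_neg_of_add_eq_zero_left h)
      · rintro (rfl | rfl)
        · exact ⟨pow_ne_zero 3 hs0, by linear_combination -(x ^ 2 + x * s ^ 2 + s ^ 4) * hs⟩
        · exact ⟨neg_ne_zero.mpr (pow_ne_zero 3 hs0),
            by linear_combination -(x ^ 2 + x * s ^ 2 + s ^ 4) * hs⟩
    have hχs : χ (s ^ 3) = 1 := by rw [map_pow]; exact hχ3 s hs0
    have hχns : χ (-s ^ 3) = 1 := by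
      rw [show -s ^ 3 = -1 * s ^ 3 by ring, map_mul, hχneg, hχs, one_mul]
    have hL : legendreSym p x.val = 1 := by
      refine (legendreSym.eq_one_iff' (p := p) ?_).mpr ?_
      · rw [hcast]; exact hx
      · rw [hcast]; exact ⟨s, hs⟩
    rw [hB, hset, Finset.sum_pair hne, hχs, hχns, hL]
    norm_num
  · have hset : univ.filter (fun u : ZMod p => u ≠ 0 ∧ u ^ 2 = x ^ 3)
        = (∅ : Finset (ZMod p)) := by
      ext u
      simp only [Finset.mem_filter, Finset.mem_univ, true_and, Finset.notMem_empty,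
        iff_false, not_and]
      intro hu0 hu2
      apply hxsq
      refine ⟨u * x⁻¹, ?_⟩
      field_simp
      linear_combination -hu2
    have hL : legendreSym p x.val = -1 := by
      refine (legendreSym.eq_neg_one_iff' (p := p)).mpr ?_
      rw [hcast]; exact hxsq
    rw [hB, hset, Finset.sum_empty, hL]
    norm_num
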